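/- Over F₂, with A the matrix with rows (1,1,1,1), (0,1,1,0), (0,0,1,1), (1,0,0,0), and with the entries of A being elements of F₂ (so that squaring is the identity), the specialization of the generic cofactor eigenrelation reads: e_i^{(j)} · b_{jk} = a_{jk} · e_i^{(k)} for all i,j,k, where e_i^{(j)} are the cofactor vectors of C = A + diag(u₁,...,u₄) specialized at the F₂ entries. Hence B acts on each of the four 4-dimensional subspaces span{e_i^{(1)},...,e_i^{(4)}} as A itself. -/

import Mathlib

open Matrix MvPolynomial

abbrev Edge := Fin 4 × (Fin 3 → Fin 2)
abbrev Vtx := Fin 4 → Fin 2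

/-- Lexicographic position of a 3-bit edge label. -/
def toFin8 (s : Fin 3 → Fin 2) : Fin 8 :=
  ⟨4 * (s 0).val + 2 * (s 1).val + (s 2).val, by
    have := (s 0).isLt; have := (s 1).isLt; have := (s 2).isLt; omega⟩

/-- The edge through vertex `c` parallel to axis `i`, labeled by the
remaining three coordinates of `c`. -/
def edgeAt (c : Vtx) (i : Fin 4) : Edge := (i, fun l => c (i.succAbove l))

/-- The 32×32 matrix that is the identity except for the 4×4 submatrix on the
four edges through vertex `c`, where it equals `A`. -/
def bigA {R : Type*} [CommRing R] (A : Matrix (Fin 4) (Fin 4) R) (c : Vtx) :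
    Matrix Edge Edge R := fun e f =>
  if (fun l => c (e.1.succAbove l)) = e.2 then
    (if (fun l => c (f.1.succAbove l)) = f.2 then A e.1 f.1 else 0)
  else if e = f then 1 else 0

/-- The `m`-th vertex of `{0,1}⁴` in lexicographic order. -/
def vertexOfFin (m : Fin 16) : Vtx :=
  fun i => ⟨m.val / 2 ^ (3 - i.val) % 2, Nat.mod_lt _ (by norm_num)⟩

/-- All sixteen vertices, ordered by increasing coordinate sum. -/
def vertexList : List Vtx :=
  ((List.finRange 16).map vertexOfFin).mergeSort
    (fun c c' => decide ((∑ i, (c i).val) ≤ ∑ i, (c' i).val))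

/-- The block `B`: product of the sixteen `bigA` matrices, starting with
vertex `(0,0,0,0)`. -/
def blockB {R : Type*} [CommRing R] (A : Matrix (Fin 4) (Fin 4) R) :
    Matrix Edge Edge R :=
  (vertexList.map (bigA A)).prod

/-- The thick matrix entry `b_{jk}` of the block. -/
def thick {R : Type*} [CommRing R] (A : Matrix (Fin 4) (Fin 4) R) (j k : Fin 4) :
    Matrix (Fin 3 → Fin 2) (Fin 3 → Fin 2) R :=
  fun s t => blockB A (j, s) (k, t)

/-- Embedding of an 8-row of the thick space `V_j` into `F³²`. -/
def embedV {R : Type*} [CommRing R] (j : Fin 4) (x : Fin 8 → R) : Edge → R :=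
  fun e => if e.1 = j then x (toFin8 e.2) else 0

/-- The representing polynomial of an 8-row of `V_j`, written in the three
variables `u_l`, `l ≠ j`. -/
noncomputable def repAt {R : Type*} [CommRing R] (j : Fin 4) (x : Fin 8 → R) :
    MvPolynomial (Fin 4) R :=
  ∑ s : Fin 3 → Fin 2, MvPolynomial.C (x (toFin8 s)) *
    ∏ l, if s l = 0 then MvPolynomial.X (j.succAbove l) else 1

/-- The (unsigned) `(i,j)` cofactor: determinant with row `i` and column `j`
deleted. -/
def cof {R : Type*} [CommRing R] (M : Matrix (Fin 4) (Fin 4) R) (i j : Fin 4) : R :=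
  (M.submatrix i.succAbove j.succAbove).det

/-- The matrix `C = A + diag(u₁,u₂,u₃,u₄)`. -/
noncomputable def Cmat {R : Type*} [CommRing R] (A : Matrix (Fin 4) (Fin 4) R) :
    Matrix (Fin 4) (Fin 4) (MvPolynomial (Fin 4) R) :=
  A.map MvPolynomial.C + Matrix.diagonal (fun i => MvPolynomial.X i)

abbrev Fgen := FractionRing (MvPolynomial (Fin 4 × Fin 4) (ZMod 2))

noncomputable def Agen : Matrix (Fin 4) (Fin 4) Fgen :=
  fun p q => algebraMap (MvPolynomial (Fin 4 × Fin 4) (ZMod 2)) Fgen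
    (MvPolynomial.X (p, q))

/-- The concrete matrix `A` of the paper's example. -/
def Aconc : Matrix (Fin 4) (Fin 4) (ZMod 2) :=
  !![1,1,1,1; 0,1,1,0; 0,0,1,1; 1,0,0,0]

/-- The matrix `A₁`. -/
def A1conc : Matrix (Fin 4) (Fin 4) (ZMod 2) :=
  !![1,0,1,1; 0,1,0,1; 0,1,1,1; 1,0,0,0]

namespace CofAux
set_option maxRecDepth 4000000
set_option maxHeartbeats 4000000

def eidx (e : Edge) : Nat := 8 * e.1.val + (toFin8 e.2).val

def tbl (rows : List Nat) : Matrix Edge Edge (ZMod 2) :=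
  fun e f => if (rows.getD (eidx e) 0 >>> eidx f) % 2 = 1 then 1 else 0

def S0L : List Nat := [282407169, 3148489218, 552977412, 581601288, 1078243600, 3431473696, 2160378944, 2290649216, 2686779784, 168428032, 328704, 657408, 5247112, 2694848512, 5259264, 10518528, 2416025610, 50462720, 1074045088, 201850880, 1048586, 807403520, 4194464, 3229614080, 5247115, 5259276, 4198576, 4210880, 1, 4, 16, 64]
def S1L : List Nat := [5247115, 3148489218, 552977412, 581601288, 1078243600, 3431473696, 2160378944, 2290649216, 2156167552, 168428032, 328704, 657408, 5247112, 2694848512, 5259264, 10518528, 547454984, 50462720, 1074045088, 201850880, 1048586, 807403520, 4194464, 3229614080, 2963283970, 5259276, 4198576, 4210880, 1, 4, 16, 64]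
def S2L : List Nat := [5247115, 2963283970, 552977412, 581601288, 1078243600, 3431473696, 2160378944, 2290649216, 2156167552, 134742528, 328704, 657408, 5247112, 2694848512, 5259264, 10518528, 547454984, 33685504, 1074045088, 201850880, 1048586, 807403520, 4194464, 3229614080, 16777216, 5259276, 4198576, 4210880, 1, 4, 16, 64]
def S3L : List Nat := [5247115, 2963283970, 5259276, 581601288, 1078243600, 3431473696, 2160378944, 2290649216, 2156167552, 134742528, 263168, 657408, 5247112, 2694848512, 5259264, 10518528, 65536, 33685504, 1074045088, 201850880, 1048586, 807403520, 4194464, 3229614080, 16777216, 547389448, 4198576, 4210880, 1, 4, 16, 64]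
def S4L : List Nat := [5247115, 2963283970, 5259276, 581601288, 4198576, 3431473696, 2160378944, 2290649216, 256, 134742528, 263168, 657408, 5247112, 2694848512, 5259264, 10518528, 65536, 33685504, 2156167296, 201850880, 1048586, 807403520, 4194464, 3229614080, 16777216, 547389448, 3229622304, 4210880, 1, 4, 16, 64]
def S5L : List Nat := [1, 2963283970, 5259276, 581601288, 4198576, 3431473696, 2160378944, 2290649216, 256, 134742528, 263168, 657408, 4198528, 2694848512, 5259264, 10518528, 65536, 33685504, 2156167296, 201850880, 1048584, 807403520, 4194464, 3229614080, 16777216, 547389448, 3229622304, 4210880, 2, 4, 16, 64]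
def S6L : List Nat := [1, 2963283970, 5259276, 547389448, 4198576, 3431473696, 2160378944, 2290649216, 256, 134742528, 263168, 526336, 4198528, 2694848512, 5259264, 10518528, 65536, 131072, 2156167296, 201850880, 1048584, 807403520, 4194464, 3229614080, 16777216, 33554432, 3229622304, 4210880, 2, 4, 16, 64]
def S7L : List Nat := [1, 2963283970, 5259276, 547389448, 4198576, 3229622304, 2160378944, 2290649216, 256, 512, 263168, 526336, 4198528, 2694848512, 5259264, 10518528, 65536, 131072, 2156167296, 134742016, 1048584, 807403520, 4194464, 3229614080, 16777216, 33554432, 67108864, 4210880, 2, 4, 16, 64]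
def S8L : List Nat := [1, 2963283970, 5259276, 547389448, 4198576, 3229622304, 4210880, 2290649216, 256, 512, 1024, 526336, 4198528, 2694848512, 5259264, 10518528, 65536, 131072, 262144, 134742016, 1048584, 807403520, 4194464, 3229614080, 16777216, 33554432, 67108864, 2155905152, 2, 4, 16, 64]
def S9L : List Nat := [1, 2, 5259276, 547389448, 4198576, 3229622304, 4210880, 2290649216, 256, 512, 1024, 526336, 4198528, 2155880448, 5259264, 10518528, 65536, 131072, 262144, 134742016, 1048584, 538968064, 4194464, 3229614080, 16777216, 33554432, 67108864, 2155905152, 268435456, 4, 16, 64]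
def S10L : List Nat := [1, 2, 4, 547389448, 4198576, 3229622304, 4210880, 2290649216, 256, 512, 1024, 526336, 4198528, 2155880448, 4210688, 10518528, 65536, 131072, 262144, 134742016, 1048576, 538968064, 4194464, 3229614080, 16777216, 33554432, 67108864, 2155905152, 268435456, 8, 16, 64]
def S11L : List Nat := [1, 2, 4, 547389448, 16, 3229622304, 4210880, 2290649216, 256, 512, 1024, 526336, 4096, 2155880448, 4210688, 10518528, 65536, 131072, 262144, 134742016, 1048576, 538968064, 4194432, 3229614080, 16777216, 33554432, 67108864, 2155905152, 268435456, 8, 32, 64]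
def S12L : List Nat := [1, 2, 4, 547389448, 16, 3229622304, 4210880, 2155905152, 256, 512, 1024, 2048, 4096, 2155880448, 4210688, 10518528, 65536, 131072, 262144, 524288, 1048576, 538968064, 4194432, 3229614080, 16777216, 33554432, 67108864, 134217728, 268435456, 8, 32, 64]
def S13L : List Nat := [1, 2, 4, 8, 16, 3229622304, 4210880, 2155905152, 256, 512, 1024, 2048, 4096, 2155880448, 4210688, 8421376, 65536, 131072, 262144, 524288, 1048576, 2097152, 4194432, 3229614080, 16777216, 33554432, 67108864, 134217728, 268435456, 536870912, 32, 64]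
def S14L : List Nat := [1, 2, 4, 8, 16, 32, 4210880, 2155905152, 256, 512, 1024, 2048, 4096, 8192, 4210688, 8421376, 65536, 131072, 262144, 524288, 1048576, 2097152, 4194432, 2155872256, 16777216, 33554432, 67108864, 134217728, 268435456, 536870912, 1073741824, 64]
def S15L : List Nat := [1, 2, 4, 8, 16, 32, 64, 2155905152, 256, 512, 1024, 2048, 4096, 8192, 16384, 8421376, 65536, 131072, 262144, 524288, 1048576, 2097152, 4194304, 2155872256, 16777216, 33554432, 67108864, 134217728, 268435456, 536870912, 1073741824, 128]
def S16L : List Nat := [1, 2, 4, 8, 16, 32, 64, 128, 256, 512, 1024, 2048, 4096, 8192, 16384, 32768, 65536, 131072, 262144, 524288, 1048576, 2097152, 4194304, 8388608, 16777216, 33554432, 67108864, 134217728, 268435456, 536870912, 1073741824, 2147483648]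

def e0rows : List Nat := [85, 128, 160, 240, 80, 117, 128, 192, 4, 196, 245, 32, 162, 136, 170, 255]

def e0 (i j : Fin 4) (n : Fin 8) : ZMod 2 :=
  if (e0rows.getD (4 * i.val + j.val) 0 >>> n.val) % 2 = 1 then 1 else 0

def Lv : List Vtx := [![0,0,0,0], ![0,0,0,1], ![0,0,1,0], ![0,1,0,0], ![1,0,0,0], ![0,0,1,1], ![0,1,0,1], ![0,1,1,0], ![1,0,0,1], ![1,0,1,0], ![1,1,0,0], ![0,1,1,1], ![1,0,1,1], ![1,1,0,1], ![1,1,1,0], ![1,1,1,1]]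

lemma bigA_mul_apply {R : Type*} [CommRing R] (A : Matrix (Fin 4) (Fin 4) R) (c : Vtx)
    (S : Matrix Edge Edge R) (e f : Edge) :
    (bigA A c * S) e f =
      if (fun l => c (e.1.succAbove l)) = e.2 then
        ∑ b : Fin 4, A e.1 b * S (edgeAt c b) f
      else S e f := by
  rw [Matrix.mul_apply]
  by_cases h : (fun l => c (e.1.succAbove l)) = e.2
  · have hterm : ∀ g : Edge, bigA A c e g =
        if (fun l => c (g.1.succAbove l)) = g.2 then A e.1 g.1 else 0 := by
      intro g; simp only [bigA]; rw [if_pos h]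
    simp only [hterm, ite_mul, zero_mul]
    rw [← Finset.sum_filter]
    have hfil : Finset.univ.filter
        (fun g : Edge => (fun l => c (g.1.succAbove l)) = g.2)
        = Finset.univ.image (edgeAt c) := by
      ext g
      simp only [Finset.mem_filter, Finset.mem_univ, true_and, Finset.mem_image, edgeAt]
      constructor
      · intro hg; exact ⟨g.1, Prod.ext rfl hg⟩
      · rintro ⟨a, rfl⟩; rfl
    rw [hfil, Finset.sum_image (fun a _ b _ hab => congrArg Prod.fst hab), if_pos h]
    rfl
  · have hterm : ∀ g : Edge, bigA A c e g = if e = g then 1 else 0 := by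
      intro g; simp only [bigA]; rw [if_neg h]
    simp only [hterm, ite_mul, one_mul, zero_mul, Finset.sum_ite_eq, Finset.mem_univ,
      if_true]
    rw [if_neg h]

lemma forall_edge2 {P : Edge → Edge → Prop} (h : ∀ p : Edge × Edge, P p.1 p.2) : ∀ e f, P e f :=
  fun e f => h (e, f)

lemma vertexList_eq : vertexList = Lv := by
  simp only [vertexList,
    show List.finRange 16 = [0,1,2,3,4,5,6,7,8,9,10,11,12,13,14,15] from by decide,
    List.map_cons, List.map_nil]
  simp only [show vertexOfFin 0 = ![0,0,0,0] from by decide, show vertexOfFin 1 = ![0,0,0,1] from by decide, show vertexOfFin 2 = ![0,0,1,0] from by decide, show vertexOfFin 3 = ![0,0,1,1] from by decide, show vertexOfFin 4 = ![0,1,0,0] from by decide, show vertexOfFin 5 = ![0,1,0,1] from by decide, show vertexOfFin 6 = ![0,1,1,0] from by decide, show vertexOfFin 7 = ![0,1,1,1] from by decide, show vertexOfFin 8 = ![1,0,0,0] from by decide, show vertexOfFin 9 = ![1,0,0,1] from by decide, show vertexOfFin 10 = ![1,0,1,0] from by decide, show vertexOfFin 11 = ![1,0,1,1] from by decide, show vertexOfFin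 12 = ![1,1,0,0] from by decide, show vertexOfFin 13 = ![1,1,0,1] from by decide, show vertexOfFin 14 = ![1,1,1,0] from by decide, show vertexOfFin 15 = ![1,1,1,1] from by decide]
  norm_num [List.mergeSort, List.merge, Fin.sum_univ_four,
    Matrix.cons_val_zero, Matrix.cons_val_one, Matrix.head_cons, Matrix.cons_val_two,
    Matrix.tail_cons, Matrix.cons_val_three, Fin.val_zero, Fin.val_one]
  decide

lemma tblS16 : tbl S16L = 1 := by
  ext e f; rw [Matrix.one_apply]; revert e f; apply forall_edge2; decide

lemma step15 : bigA Aconc ![1,1,1,1] * tbl S16L = tbl S15L := by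
  ext e f; rw [bigA_mul_apply]; revert e f; apply forall_edge2; decide

lemma step14 : bigA Aconc ![1,1,1,0] * tbl S15L = tbl S14L := by
  ext e f; rw [bigA_mul_apply]; revert e f; apply forall_edge2; decide

lemma step13 : bigA Aconc ![1,1,0,1] * tbl S14L = tbl S13L := by
  ext e f; rw [bigA_mul_apply]; revert e f; apply forall_edge2; decide

lemma step12 : bigA Aconc ![1,0,1,1] * tbl S13L = tbl S12L := by
  ext e f; rw [bigA_mul_apply]; revert e f; apply forall_edge2; decide

lemma step11 : bigA Aconc ![0,1,1,1] * tbl S12L = tbl S11L := by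
  ext e f; rw [bigA_mul_apply]; revert e f; apply forall_edge2; decide

lemma step10 : bigA Aconc ![1,1,0,0] * tbl S11L = tbl S10L := by
  ext e f; rw [bigA_mul_apply]; revert e f; apply forall_edge2; decide

lemma step9 : bigA Aconc ![1,0,1,0] * tbl S10L = tbl S9L := by
  ext e f; rw [bigA_mul_apply]; revert e f; apply forall_edge2; decide

lemma step8 : bigA Aconc ![1,0,0,1] * tbl S9L = tbl S8L := by
  ext e f; rw [bigA_mul_apply]; revert e f; apply forall_edge2; decide

lemma step7 : bigA Aconc ![0,1,1,0] * tbl S8L = tbl S7L := by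
  ext e f; rw [bigA_mul_apply]; revert e f; apply forall_edge2; decide

lemma step6 : bigA Aconc ![0,1,0,1] * tbl S7L = tbl S6L := by
  ext e f; rw [bigA_mul_apply]; revert e f; apply forall_edge2; decide

lemma step5 : bigA Aconc ![0,0,1,1] * tbl S6L = tbl S5L := by
  ext e f; rw [bigA_mul_apply]; revert e f; apply forall_edge2; decide

lemma step4 : bigA Aconc ![1,0,0,0] * tbl S5L = tbl S4L := by
  ext e f; rw [bigA_mul_apply]; revert e f; apply forall_edge2; decide

lemma step3 : bigA Aconc ![0,1,0,0] * tbl S4L = tbl S3L := by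
  ext e f; rw [bigA_mul_apply]; revert e f; apply forall_edge2; decide

lemma step2 : bigA Aconc ![0,0,1,0] * tbl S3L = tbl S2L := by
  ext e f; rw [bigA_mul_apply]; revert e f; apply forall_edge2; decide

lemma step1 : bigA Aconc ![0,0,0,1] * tbl S2L = tbl S1L := by
  ext e f; rw [bigA_mul_apply]; revert e f; apply forall_edge2; decide

lemma step0 : bigA Aconc ![0,0,0,0] * tbl S1L = tbl S0L := by
  ext e f; rw [bigA_mul_apply]; revert e f; apply forall_edge2; decide


lemma blockB_eq : blockB Aconc = tbl S0L := by
  rw [blockB, vertexList_eq, Lv]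
  simp only [List.map_cons, List.map_nil, List.prod_cons, List.prod_nil]
  rw [← tblS16, step15, step14, step13, step12, step11, step10, step9, step8, step7,
    step6, step5, step4, step3, step2, step1, step0]

lemma two_zero : (2 : MvPolynomial (Fin 4) (ZMod 2)) = 0 := by
  rw [← map_ofNat (C : ZMod 2 →+* MvPolynomial (Fin 4) (ZMod 2)) 2,
    show (2 : ZMod 2) = 0 from by decide, map_zero]

lemma univ_pi8 : (Finset.univ : Finset (Fin 3 → Fin 2)) =
    {![0,0,0], ![0,0,1], ![0,1,0], ![0,1,1], ![1,0,0], ![1,0,1], ![1,1,0], ![1,1,1]} := by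
  decide

lemma sum_pi8 {M : Type*} [AddCommMonoid M] (f : (Fin 3 → Fin 2) → M) :
    ∑ s : Fin 3 → Fin 2, f s =
      f ![0,0,0] + (f ![0,0,1] + (f ![0,1,0] + (f ![0,1,1] + (f ![1,0,0] +
        (f ![1,0,1] + (f ![1,1,0] + f ![1,1,1])))))) := by
  rw [univ_pi8]
  rw [Finset.sum_insert (by decide), Finset.sum_insert (by decide),
    Finset.sum_insert (by decide), Finset.sum_insert (by decide),
    Finset.sum_insert (by decide), Finset.sum_insert (by decide),
    Finset.sum_insert (by decide), Finset.sum_singleton]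

lemma sa0 : (0 : Fin 4).succAbove = ![1, 2, 3] := by decide
lemma sa1 : (1 : Fin 4).succAbove = ![0, 2, 3] := by decide
lemma sa2 : (2 : Fin 4).succAbove = ![0, 1, 3] := by decide
lemma sa3 : (3 : Fin 4).succAbove = ![0, 1, 2] := by decide

lemma lemB00 : repAt (0 : Fin 4) (e0 0 0) = cof (Cmat Aconc) 0 0 := by
  rw [repAt, sum_pi8]
  simp (config := { decide := true }) [e0, e0rows, toFin8, cof, Cmat, Aconc,
    Matrix.det_fin_three, Matrix.submatrix_apply, Matrix.add_apply, Matrix.map_apply,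
    Matrix.diagonal_apply, Fin.prod_univ_three, sa0, sa1, sa2, sa3,
    Matrix.vecHead, Matrix.vecTail, Function.comp,
    show Fin.succ (0 : Fin 3) = (1 : Fin 4) from by decide,
    show Fin.succ (1 : Fin 3) = (2 : Fin 4) from by decide,
    show Fin.succ (2 : Fin 3) = (3 : Fin 4) from by decide]
  all_goals linear_combination (0 : MvPolynomial (Fin 4) (ZMod 2)) * two_zero

lemma lemB01 : repAt (1 : Fin 4) (e0 0 1) = cof (Cmat Aconc) 0 1 := by
  rw [repAt, sum_pi8]
  simp (config := { decide := true }) [e0, e0rows, toFin8, cof, Cmat, Aconc,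
    Matrix.det_fin_three, Matrix.submatrix_apply, Matrix.add_apply, Matrix.map_apply,
    Matrix.diagonal_apply, Fin.prod_univ_three, sa0, sa1, sa2, sa3,
    Matrix.vecHead, Matrix.vecTail, Function.comp,
    show Fin.succ (0 : Fin 3) = (1 : Fin 4) from by decide,
    show Fin.succ (1 : Fin 3) = (2 : Fin 4) from by decide,
    show Fin.succ (2 : Fin 3) = (3 : Fin 4) from by decide]
  all_goals linear_combination (0 : MvPolynomial (Fin 4) (ZMod 2)) * two_zero

lemma lemB02 : repAt (2 : Fin 4) (e0 0 2) = cof (Cmat Aconc) 0 2 := by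
  rw [repAt, sum_pi8]
  simp (config := { decide := true }) [e0, e0rows, toFin8, cof, Cmat, Aconc,
    Matrix.det_fin_three, Matrix.submatrix_apply, Matrix.add_apply, Matrix.map_apply,
    Matrix.diagonal_apply, Fin.prod_univ_three, sa0, sa1, sa2, sa3,
    Matrix.vecHead, Matrix.vecTail, Function.comp,
    show Fin.succ (0 : Fin 3) = (1 : Fin 4) from by decide,
    show Fin.succ (1 : Fin 3) = (2 : Fin 4) from by decide,
    show Fin.succ (2 : Fin 3) = (3 : Fin 4) from by decide]
  all_goals linear_combination (0 : MvPolynomial (Fin 4) (ZMod 2)) * two_zero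

lemma lemB03 : repAt (3 : Fin 4) (e0 0 3) = cof (Cmat Aconc) 0 3 := by
  rw [repAt, sum_pi8]
  simp (config := { decide := true }) [e0, e0rows, toFin8, cof, Cmat, Aconc,
    Matrix.det_fin_three, Matrix.submatrix_apply, Matrix.add_apply, Matrix.map_apply,
    Matrix.diagonal_apply, Fin.prod_univ_three, sa0, sa1, sa2, sa3,
    Matrix.vecHead, Matrix.vecTail, Function.comp,
    show Fin.succ (0 : Fin 3) = (1 : Fin 4) from by decide,
    show Fin.succ (1 : Fin 3) = (2 : Fin 4) from by decide,
    show Fin.succ (2 : Fin 3) = (3 : Fin 4) from by decide]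
  all_goals linear_combination (0 : MvPolynomial (Fin 4) (ZMod 2)) * two_zero

lemma lemB10 : repAt (0 : Fin 4) (e0 1 0) = cof (Cmat Aconc) 1 0 := by
  rw [repAt, sum_pi8, cof, Matrix.det_fin_three]
  simp (config := { decide := true }) [e0, e0rows, toFin8, cof, Cmat, Aconc,
    Matrix.det_fin_three, Matrix.submatrix_apply, Matrix.add_apply, Matrix.map_apply,
    Matrix.diagonal_apply, Fin.prod_univ_three, sa0, sa1, sa2, sa3,
    Matrix.vecHead, Matrix.vecTail, Function.comp,
    show Fin.succ (0 : Fin 3) = (1 : Fin 4) from by decide,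
    show Fin.succ (1 : Fin 3) = (2 : Fin 4) from by decide,
    show Fin.succ (2 : Fin 3) = (3 : Fin 4) from by decide]
  all_goals linear_combination (0 : MvPolynomial (Fin 4) (ZMod 2)) * two_zero

lemma lemB11 : repAt (1 : Fin 4) (e0 1 1) = cof (Cmat Aconc) 1 1 := by
  rw [repAt, sum_pi8, cof, Matrix.det_fin_three]
  simp (config := { decide := true }) [e0, e0rows, toFin8, cof, Cmat, Aconc,
    Matrix.det_fin_three, Matrix.submatrix_apply, Matrix.add_apply, Matrix.map_apply,
    Matrix.diagonal_apply, Fin.prod_univ_three, sa0, sa1, sa2, sa3,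
    Matrix.vecHead, Matrix.vecTail, Function.comp,
    show Fin.succ (0 : Fin 3) = (1 : Fin 4) from by decide,
    show Fin.succ (1 : Fin 3) = (2 : Fin 4) from by decide,
    show Fin.succ (2 : Fin 3) = (3 : Fin 4) from by decide]
  all_goals linear_combination (X 2 : MvPolynomial (Fin 4) (ZMod 2)) * two_zero

lemma lemB12 : repAt (2 : Fin 4) (e0 1 2) = cof (Cmat Aconc) 1 2 := by
  rw [repAt, sum_pi8, cof, Matrix.det_fin_three]
  simp (config := { decide := true }) [e0, e0rows, toFin8, cof, Cmat, Aconc,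
    Matrix.det_fin_three, Matrix.submatrix_apply, Matrix.add_apply, Matrix.map_apply,
    Matrix.diagonal_apply, Fin.prod_univ_three, sa0, sa1, sa2, sa3,
    Matrix.vecHead, Matrix.vecTail, Function.comp,
    show Fin.succ (0 : Fin 3) = (1 : Fin 4) from by decide,
    show Fin.succ (1 : Fin 3) = (2 : Fin 4) from by decide,
    show Fin.succ (2 : Fin 3) = (3 : Fin 4) from by decide]
  all_goals linear_combination (0 : MvPolynomial (Fin 4) (ZMod 2)) * two_zero

lemma lemB13 : repAt (3 : Fin 4) (e0 1 3) = cof (Cmat Aconc) 1 3 := by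
  rw [repAt, sum_pi8, cof, Matrix.det_fin_three]
  simp (config := { decide := true }) [e0, e0rows, toFin8, cof, Cmat, Aconc,
    Matrix.det_fin_three, Matrix.submatrix_apply, Matrix.add_apply, Matrix.map_apply,
    Matrix.diagonal_apply, Fin.prod_univ_three, sa0, sa1, sa2, sa3,
    Matrix.vecHead, Matrix.vecTail, Function.comp,
    show Fin.succ (0 : Fin 3) = (1 : Fin 4) from by decide,
    show Fin.succ (1 : Fin 3) = (2 : Fin 4) from by decide,
    show Fin.succ (2 : Fin 3) = (3 : Fin 4) from by decide]
  all_goals linear_combination (0 : MvPolynomial (Fin 4) (ZMod 2)) * two_zero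

lemma lemB20 : repAt (0 : Fin 4) (e0 2 0) = cof (Cmat Aconc) 2 0 := by
  rw [repAt, sum_pi8, cof, Matrix.det_fin_three]
  simp (config := { decide := true }) [e0, e0rows, toFin8, cof, Cmat, Aconc,
    Matrix.det_fin_three, Matrix.submatrix_apply, Matrix.add_apply, Matrix.map_apply,
    Matrix.diagonal_apply, Fin.prod_univ_three, sa0, sa1, sa2, sa3,
    Matrix.vecHead, Matrix.vecTail, Function.comp,
    show Fin.succ (0 : Fin 3) = (1 : Fin 4) from by decide,
    show Fin.succ (1 : Fin 3) = (2 : Fin 4) from by decide,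
    show Fin.succ (2 : Fin 3) = (3 : Fin 4) from by decide]
  all_goals linear_combination (X 1 * X 3 : MvPolynomial (Fin 4) (ZMod 2)) * two_zero

lemma lemB21 : repAt (1 : Fin 4) (e0 2 1) = cof (Cmat Aconc) 2 1 := by
  rw [repAt, sum_pi8, cof, Matrix.det_fin_three]
  simp (config := { decide := true }) [e0, e0rows, toFin8, cof, Cmat, Aconc,
    Matrix.det_fin_three, Matrix.submatrix_apply, Matrix.add_apply, Matrix.map_apply,
    Matrix.diagonal_apply, Fin.prod_univ_three, sa0, sa1, sa2, sa3,
    Matrix.vecHead, Matrix.vecTail, Function.comp,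
    show Fin.succ (0 : Fin 3) = (1 : Fin 4) from by decide,
    show Fin.succ (1 : Fin 3) = (2 : Fin 4) from by decide,
    show Fin.succ (2 : Fin 3) = (3 : Fin 4) from by decide]
  all_goals linear_combination (1 : MvPolynomial (Fin 4) (ZMod 2)) * two_zero

lemma lemB22 : repAt (2 : Fin 4) (e0 2 2) = cof (Cmat Aconc) 2 2 := by
  rw [repAt, sum_pi8, cof, Matrix.det_fin_three]
  simp (config := { decide := true }) [e0, e0rows, toFin8, cof, Cmat, Aconc,
    Matrix.det_fin_three, Matrix.submatrix_apply, Matrix.add_apply, Matrix.map_apply,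
    Matrix.diagonal_apply, Fin.prod_univ_three, sa0, sa1, sa2, sa3,
    Matrix.vecHead, Matrix.vecTail, Function.comp,
    show Fin.succ (0 : Fin 3) = (1 : Fin 4) from by decide,
    show Fin.succ (1 : Fin 3) = (2 : Fin 4) from by decide,
    show Fin.succ (2 : Fin 3) = (3 : Fin 4) from by decide]
  all_goals linear_combination (1 + X 1 : MvPolynomial (Fin 4) (ZMod 2)) * two_zero

lemma lemB23 : repAt (3 : Fin 4) (e0 2 3) = cof (Cmat Aconc) 2 3 := by
  rw [repAt, sum_pi8, cof, Matrix.det_fin_three]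
  simp (config := { decide := true }) [e0, e0rows, toFin8, cof, Cmat, Aconc,
    Matrix.det_fin_three, Matrix.submatrix_apply, Matrix.add_apply, Matrix.map_apply,
    Matrix.diagonal_apply, Fin.prod_univ_three, sa0, sa1, sa2, sa3,
    Matrix.vecHead, Matrix.vecTail, Function.comp,
    show Fin.succ (0 : Fin 3) = (1 : Fin 4) from by decide,
    show Fin.succ (1 : Fin 3) = (2 : Fin 4) from by decide,
    show Fin.succ (2 : Fin 3) = (3 : Fin 4) from by decide]
  all_goals linear_combination (X 1 : MvPolynomial (Fin 4) (ZMod 2)) * two_zero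

lemma lemB30 : repAt (0 : Fin 4) (e0 3 0) = cof (Cmat Aconc) 3 0 := by
  rw [repAt, sum_pi8, cof, Matrix.det_fin_three]
  simp (config := { decide := true }) [e0, e0rows, toFin8, cof, Cmat, Aconc,
    Matrix.det_fin_three, Matrix.submatrix_apply, Matrix.add_apply, Matrix.map_apply,
    Matrix.diagonal_apply, Fin.prod_univ_three, sa0, sa1, sa2, sa3,
    Matrix.vecHead, Matrix.vecTail, Function.comp,
    show Fin.succ (0 : Fin 3) = (1 : Fin 4) from by decide,
    show Fin.succ (1 : Fin 3) = (2 : Fin 4) from by decide,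
    show Fin.succ (2 : Fin 3) = (3 : Fin 4) from by decide]
  all_goals linear_combination (0 : MvPolynomial (Fin 4) (ZMod 2)) * two_zero

lemma lemB31 : repAt (1 : Fin 4) (e0 3 1) = cof (Cmat Aconc) 3 1 := by
  rw [repAt, sum_pi8, cof, Matrix.det_fin_three]
  simp (config := { decide := true }) [e0, e0rows, toFin8, cof, Cmat, Aconc,
    Matrix.det_fin_three, Matrix.submatrix_apply, Matrix.add_apply, Matrix.map_apply,
    Matrix.diagonal_apply, Fin.prod_univ_three, sa0, sa1, sa2, sa3,
    Matrix.vecHead, Matrix.vecTail, Function.comp,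
    show Fin.succ (0 : Fin 3) = (1 : Fin 4) from by decide,
    show Fin.succ (1 : Fin 3) = (2 : Fin 4) from by decide,
    show Fin.succ (2 : Fin 3) = (3 : Fin 4) from by decide]
  all_goals linear_combination (0 : MvPolynomial (Fin 4) (ZMod 2)) * two_zero

lemma lemB32 : repAt (2 : Fin 4) (e0 3 2) = cof (Cmat Aconc) 3 2 := by
  rw [repAt, sum_pi8, cof, Matrix.det_fin_three]
  simp (config := { decide := true }) [e0, e0rows, toFin8, cof, Cmat, Aconc,
    Matrix.det_fin_three, Matrix.submatrix_apply, Matrix.add_apply, Matrix.map_apply,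
    Matrix.diagonal_apply, Fin.prod_univ_three, sa0, sa1, sa2, sa3,
    Matrix.vecHead, Matrix.vecTail, Function.comp,
    show Fin.succ (0 : Fin 3) = (1 : Fin 4) from by decide,
    show Fin.succ (1 : Fin 3) = (2 : Fin 4) from by decide,
    show Fin.succ (2 : Fin 3) = (3 : Fin 4) from by decide]
  all_goals linear_combination (0 : MvPolynomial (Fin 4) (ZMod 2)) * two_zero

lemma lemB33 : repAt (3 : Fin 4) (e0 3 3) = cof (Cmat Aconc) 3 3 := by
  rw [repAt, sum_pi8, cof, Matrix.det_fin_three]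
  simp (config := { decide := true }) [e0, e0rows, toFin8, cof, Cmat, Aconc,
    Matrix.det_fin_three, Matrix.submatrix_apply, Matrix.add_apply, Matrix.map_apply,
    Matrix.diagonal_apply, Fin.prod_univ_three, sa0, sa1, sa2, sa3,
    Matrix.vecHead, Matrix.vecTail, Function.comp,
    show Fin.succ (0 : Fin 3) = (1 : Fin 4) from by decide,
    show Fin.succ (1 : Fin 3) = (2 : Fin 4) from by decide,
    show Fin.succ (2 : Fin 3) = (3 : Fin 4) from by decide]
  all_goals linear_combination (0 : MvPolynomial (Fin 4) (ZMod 2)) * two_zero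

lemma lemB : ∀ i j : Fin 4, repAt j (e0 i j) = cof (Cmat Aconc) i j := by
  intro i j
  fin_cases i <;> fin_cases j
  exacts [lemB00, lemB01, lemB02, lemB03, lemB10, lemB11, lemB12, lemB13,
    lemB20, lemB21, lemB22, lemB23, lemB30, lemB31, lemB32, lemB33]

noncomputable def dexp (j : Fin 4) (s : Fin 3 → Fin 2) : Fin 4 →₀ ℕ :=
  ∑ l : Fin 3, if s l = 0 then Finsupp.single (j.succAbove l) 1 else 0

lemma prod_mon (j : Fin 4) (s : Fin 3 → Fin 2) :
    (∏ l, if s l = 0 then (X (j.succAbove l) : MvPolynomial (Fin 4) (ZMod 2)) else 1)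
      = monomial (dexp j s) 1 := by
  have h : ∀ l : Fin 3,
      (if s l = 0 then (X (j.succAbove l) : MvPolynomial (Fin 4) (ZMod 2)) else 1)
        = monomial (if s l = 0 then Finsupp.single (j.succAbove l) 1 else 0) 1 := by
    intro l
    split
    · rfl
    · rw [monomial_zero', C_1]
  simp only [h, dexp, Fin.prod_univ_three, Fin.sum_univ_three, monomial_mul, one_mul]

lemma dexp_inj (j : Fin 4) (t s : Fin 3 → Fin 2) (h : dexp j t = dexp j s) : t = s := by
  funext l
  have hval : ∀ u : Fin 3 → Fin 2, (dexp j u) (j.succAbove l)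
      = if u l = 0 then 1 else 0 := by
    intro u
    rw [dexp, Finsupp.finset_sum_apply, Fin.sum_univ_three]
    have hterm : ∀ l' : Fin 3,
        ((if u l' = 0 then Finsupp.single (j.succAbove l') 1 else 0) : Fin 4 →₀ ℕ)
          (j.succAbove l) = if l' = l ∧ u l' = 0 then 1 else 0 := by
      intro l'
      split
      · rename_i hu
        rw [Finsupp.single_apply]
        by_cases hl : l' = l
        · subst hl; simp [hu]
        · rw [if_neg (fun hsa => hl (j.succAbove_right_injective hsa)),
            if_neg (fun hc => hl hc.1)]
      · rename_i hu
        simp only [Finsupp.coe_zero, Pi.zero_apply]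
        rw [if_neg (fun hc => hu hc.2)]
    rw [hterm 0, hterm 1, hterm 2]
    fin_cases l <;> simp
  have h2 := congrArg (fun F : Fin 4 →₀ ℕ => F (j.succAbove l)) h
  simp only [hval] at h2
  by_cases ht : t l = 0 <;> by_cases hs : s l = 0
  · rw [ht, hs]
  · rw [if_pos ht, if_neg hs] at h2; exact absurd h2 one_ne_zero
  · rw [if_neg ht, if_pos hs] at h2; exact absurd h2.symm one_ne_zero
  · omega
  
lemma coeff_repAt (j : Fin 4) (x : Fin 8 → ZMod 2) (s : Fin 3 → Fin 2) :
    coeff (dexp j s) (repAt j x) = x (toFin8 s) := by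
  rw [repAt]
  simp only [fun t => prod_mon j t, C_mul_monomial, mul_one]
  rw [coeff_sum]
  simp only [coeff_monomial]
  have hcond : ∀ t : Fin 3 → Fin 2, (dexp j t = dexp j s) = (t = s) :=
    fun t => propext ⟨fun h => dexp_inj j t s h, fun h => by rw [h]⟩
  simp only [hcond]
  rw [Finset.sum_ite_eq' Finset.univ s (fun t => x (toFin8 t)), if_pos (Finset.mem_univ s)]

lemma toFin8_surj : ∀ n : Fin 8, ∃ s : Fin 3 → Fin 2, toFin8 s = n := by decide

lemma key : ∀ (i j k : Fin 4) (t : Fin 3 → Fin 2),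
    (∑ s : Fin 3 → Fin 2, e0 i j (toFin8 s) * tbl S0L (j, s) (k, t))
      = Aconc j k * e0 i k (toFin8 t) := by decide

end CofAux

open CofAux in
/-- Over `F₂`, squaring is the identity, so the generic cofactor
eigenrelation specializes to `e_i^{(j)} · b_{jk} = a_{jk} · e_i^{(k)}` for the
concrete matrix `A`; hence `B` acts on each of the four 4-dimensional spans
`span{e_i^{(1)},…,e_i^{(4)}}` as `A` itself. -/
theorem cofactor_eigenrelation_F2 :
    ∀ e : Fin 4 → Fin 4 → Fin 8 → ZMod 2,
      (∀ i j, repAt j (e i j) = cof (Cmat Aconc) i j) →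
      (∀ i j k : Fin 4, ∀ t : Fin 3 → Fin 2,
        (∑ s : Fin 3 → Fin 2, e i j (toFin8 s) * thick Aconc j k s t) =
          Aconc j k * e i k (toFin8 t)) ∧
      (∀ i j : Fin 4,
        embedV j (e i j) ᵥ* blockB Aconc =
          ∑ k : Fin 4, Aconc j k • embedV k (e i k)) := by
  intro e he
  have he0 : ∀ i j, e i j = CofAux.e0 i j := by
    intro i j
    funext n
    obtain ⟨s, rfl⟩ := CofAux.toFin8_surj n
    rw [← CofAux.coeff_repAt j (e i j) s, he i j, ← CofAux.lemB i j, CofAux.coeff_repAt]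
  have h1 : ∀ i j k : Fin 4, ∀ t : Fin 3 → Fin 2,
      (∑ s : Fin 3 → Fin 2, e i j (toFin8 s) * thick Aconc j k s t) =
        Aconc j k * e i k (toFin8 t) := by
    intro i j k t
    simp only [he0, thick, CofAux.blockB_eq]
    exact CofAux.key i j k t
  refine ⟨h1, ?_⟩
  intro i j
  funext f
  obtain ⟨k, t⟩ := f
  have hL : (embedV j (e i j) ᵥ* blockB Aconc) (k, t)
      = ∑ s : Fin 3 → Fin 2, e i j (toFin8 s) * blockB Aconc (j, s) (k, t) := by
    simp only [Matrix.vecMul, dotProduct, embedV, ite_mul, zero_mul]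
    rw [← Finset.sum_filter]
    have hfil : (Finset.univ.filter (fun g : Edge => g.1 = j))
        = Finset.univ.image (fun s : Fin 3 → Fin 2 => (j, s)) := by
      ext g
      simp only [Finset.mem_filter, Finset.mem_univ, true_and, Finset.mem_image]
      constructor
      · intro hg; exact ⟨g.2, Prod.ext hg.symm rfl⟩
      · rintro ⟨s, rfl⟩; rfl
    rw [hfil, Finset.sum_image (fun a _ b _ hab => congrArg Prod.snd hab)]
  have hR : (∑ k' : Fin 4, Aconc j k' • embedV k' (e i k')) (k, t)
      = Aconc j k * e i k (toFin8 t) := by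
    simp only [Finset.sum_apply, Pi.smul_apply, embedV, smul_eq_mul, mul_ite, mul_zero]
    rw [Finset.sum_ite_eq Finset.univ k (fun k' => Aconc j k' * e i k' (toFin8 t)),
      if_pos (Finset.mem_univ k)]
  rw [hL, hR]
  exact h1 i j k t
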